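/- For every nonzero vector v ∈ ℝ^n and every a ∈ ℝ, if x is chosen uniformly at random from {0,1}^n, then ℙ(⟨x, v⟩ = a) ≤ 1/√|supp(v)|. -/

import Mathlib

open Finset

/-- The probability, over `x` chosen uniformly at random from `{0,1}^n`
(encoded as `Fin n → Fin 2`), of an event `E`. -/
noncomputable def cubeProb (n : ℕ) (E : Set (Fin n → Fin 2)) : ℝ :=
  (E.ncard : ℝ) / 2 ^ n

lemma centralBinom_sqrt_le (m : ℕ) :
    (Nat.centralBinom m : ℝ) * Real.sqrt (3 * m + 1) ≤ 4 ^ m := by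
  induction m with
  | zero => simp [Nat.centralBinom_zero]
  | succ m ih =>
    have hkey : ((m : ℝ) + 1) * Nat.centralBinom (m + 1)
        = 2 * (2 * m + 1) * Nat.centralBinom m := by
      exact_mod_cast congrArg (Nat.cast : ℕ → ℝ) (Nat.succ_mul_centralBinom_succ m)
    set s1 := Real.sqrt (3 * m + 1) with hs1def
    have h34 : (3 : ℝ) * ((m:ℕ) + 1 : ℕ) + 1 = 3 * m + 4 := by push_cast; ring
    rw [h34]
    set s2 := Real.sqrt (3 * m + 4) with hs2def
    have hs1n : (0:ℝ) ≤ s1 := Real.sqrt_nonneg _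
    have hs2n : (0:ℝ) ≤ s2 := Real.sqrt_nonneg _
    have hs1 : s1 ^ 2 = 3 * m + 1 := Real.sq_sqrt (by positivity)
    have hs2 : s2 ^ 2 = 3 * m + 4 := Real.sq_sqrt (by positivity)
    have stepA : (2 * (m:ℝ) + 1) * s2 ≤ 2 * ((m:ℝ) + 1) * s1 := by
      have h1 : (2 * (m:ℝ) + 1) * s2 = Real.sqrt ((2*m+1)^2 * (3*m+4)) := by
        rw [Real.sqrt_mul (sq_nonneg _), Real.sqrt_sq (by positivity)]
      have h2 : 2 * ((m:ℝ) + 1) * s1 = Real.sqrt ((2*(m+1))^2 * (3*m+1)) := by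
        rw [Real.sqrt_mul (sq_nonneg _), Real.sqrt_sq (by positivity)]
      rw [h1, h2]
      apply Real.sqrt_le_sqrt
      nlinarith [sq_nonneg ((m:ℝ))]
    have hc : (0:ℝ) ≤ (Nat.centralBinom m : ℝ) := by positivity
    have hmul : (0:ℝ) < (m:ℝ) + 1 := by positivity
    rw [← mul_le_mul_iff_of_pos_left hmul]
    calc ((m:ℝ)+1) * ((Nat.centralBinom (m+1) : ℝ) * s2)
        = (2 * (2 * m + 1) * Nat.centralBinom m) * s2 := by
          rw [← mul_assoc, hkey]
      _ = 2 * ((2 * (m:ℝ) + 1) * s2) * (Nat.centralBinom m : ℝ) := by ring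
      _ ≤ 2 * (2 * ((m:ℝ) + 1) * s1) * (Nat.centralBinom m : ℝ) := by
          apply mul_le_mul_of_nonneg_right _ hc
          have := mul_le_mul_of_nonneg_left stepA (by norm_num : (0:ℝ) ≤ 2)
          linarith
      _ = 4 * ((m:ℝ)+1) * ((Nat.centralBinom m : ℝ) * s1) := by ring
      _ ≤ 4 * ((m:ℝ)+1) * 4 ^ m := by
          apply mul_le_mul_of_nonneg_left ih (by positivity)
      _ = ((m:ℝ)+1) * 4 ^ (m+1) := by ring

lemma choose_sqrt_le (s : ℕ) (hs : 1 ≤ s) :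
    ((s.choose (s / 2) : ℕ) : ℝ) * Real.sqrt s ≤ 2 ^ s := by
  obtain ⟨m, rfl | rfl⟩ := Nat.even_or_odd' s
  · -- s = 2m
    have hm : 1 ≤ m := by omega
    have h1 : (2 * m).choose (2 * m / 2) = Nat.centralBinom m := by
      rw [Nat.centralBinom_eq_two_mul_choose]; congr 1; omega
    rw [h1]
    have h2 : Real.sqrt (2 * m : ℕ) ≤ Real.sqrt (3 * m + 1) := by
      apply Real.sqrt_le_sqrt; push_cast; nlinarith [hm]
    calc (Nat.centralBinom m : ℝ) * Real.sqrt (2 * m : ℕ)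
        ≤ (Nat.centralBinom m : ℝ) * Real.sqrt (3 * m + 1) := by
          apply mul_le_mul_of_nonneg_left h2 (by positivity)
      _ ≤ 4 ^ m := centralBinom_sqrt_le m
      _ = 2 ^ (2 * m) := by rw [pow_mul]; norm_num
  · -- s = 2m + 1
    have hdiv : (2 * m + 1) / 2 = m := by omega
    rw [hdiv]
    have hsymm : (2 * m + 1).choose (m + 1) = (2 * m + 1).choose m := by
      rw [← Nat.choose_symm (by omega : m + 1 ≤ 2 * m + 1)]
      congr 1; omega
    have h2 : 2 * (2 * m + 1).choose m = Nat.centralBinom (m + 1) := by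
      rw [Nat.centralBinom_eq_two_mul_choose]
      have : 2 * (m + 1) = (2 * m + 1) + 1 := by omega
      rw [this, Nat.choose_succ_succ, hsymm]; omega
    have h2' : (2:ℝ) * ((2 * m + 1).choose m : ℝ) = (Nat.centralBinom (m+1) : ℝ) := by
      exact_mod_cast congrArg (Nat.cast : ℕ → ℝ) h2
    have h3 : Real.sqrt (2 * m + 1 : ℕ) ≤ Real.sqrt (3 * ((m+1):ℕ) + 1) := by
      apply Real.sqrt_le_sqrt; push_cast; nlinarith
    have h4 := centralBinom_sqrt_le (m + 1)
    have h5 : (2:ℝ) * (((2 * m + 1).choose m : ℝ) * Real.sqrt (2 * m + 1 : ℕ))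
        ≤ 4 ^ (m + 1) := by
      calc (2:ℝ) * (((2 * m + 1).choose m : ℝ) * Real.sqrt (2 * m + 1 : ℕ))
          = (Nat.centralBinom (m+1) : ℝ) * Real.sqrt (2 * m + 1 : ℕ) := by
            rw [← h2']; ring
        _ ≤ (Nat.centralBinom (m+1) : ℝ) * Real.sqrt (3 * ((m+1):ℕ) + 1) := by
            apply mul_le_mul_of_nonneg_left h3 (by positivity)
        _ ≤ 4 ^ (m + 1) := h4
    have h6 : (4:ℝ) ^ (m + 1) = 2 * 2 ^ (2 * m + 1) := by
      have : (4:ℝ) = 2 ^ 2 := by norm_num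
      rw [this, ← pow_mul]
      rw [show 2 * (m+1) = (2*m+1)+1 by omega, pow_succ]
      ring
    rw [h6] at h5
    linarith

/-- The Littlewood–Offord Lemma: for a nonzero `v ∈ ℝ^n` and `a ∈ ℝ`, the probability
that `⟨x, v⟩ = a` for a uniformly random `x ∈ {0,1}^n` is at most `1/√|supp(v)|`. -/
theorem littlewood_offord {n : ℕ} (v : Fin n → ℝ) (hv : v ≠ 0) (a : ℝ) :
    cubeProb n {x | ∑ j, ((x j : ℕ) : ℝ) * v j = a}
      ≤ 1 / Real.sqrt ({j : Fin n | v j ≠ 0}.ncard) := by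
  classical
  set s := Fintype.card {j : Fin n // v j ≠ 0} with hsdef
  have hncard : {j : Fin n | v j ≠ 0}.ncard = s := by
    rw [Set.ncard_eq_toFinset_card', Set.toFinset_card]; rfl
  have hs1 : 1 ≤ s := by
    obtain ⟨j, hj⟩ : ∃ j, v j ≠ 0 := by
      by_contra h; push_neg at h; exact hv (funext h)
    exact Fintype.card_pos_iff.mpr ⟨⟨j, hj⟩⟩
  set Ef : Finset (Fin n → Fin 2) :=
    univ.filter (fun x => ∑ j, ((x j : ℕ) : ℝ) * v j = a) with hEf
  have hEcard : {x : Fin n → Fin 2 | ∑ j, ((x j : ℕ) : ℝ) * v j = a}.ncard = Ef.card := by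
    rw [← Set.ncard_coe_finset]; congr 1; ext x; simp [hEf]
  set c : ℝ := ∑ j ∈ univ.filter (fun j => v j < 0), v j with hc
  set B : (Fin n → Fin 2) → Finset {j : Fin n // v j ≠ 0} :=
    fun x => univ.filter (fun j => if 0 < v j.1 then x j.1 = 1 else x j.1 = 0) with hB
  -- key sum identity
  have hsum : ∀ x : Fin n → Fin 2,
      ∑ j, ((x j : ℕ) : ℝ) * v j = (∑ j ∈ B x, |v j.1|) + c := by
    intro x
    have hmap : (B x).map ⟨Subtype.val, Subtype.val_injective⟩
        = univ.filter (fun j : Fin n =>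
            v j ≠ 0 ∧ (if 0 < v j then x j = 1 else x j = 0)) := by
      ext j
      simp only [hB, Finset.mem_map, Finset.mem_filter, Finset.mem_univ, true_and,
        Function.Embedding.coeFn_mk]
      constructor
      · rintro ⟨⟨j', hj'⟩, hcond, rfl⟩; exact ⟨hj', hcond⟩
      · rintro ⟨hj, hcond⟩; exact ⟨⟨j, hj⟩, hcond, rfl⟩
    have hT : ∑ j ∈ B x, |v j.1|
        = ∑ j ∈ univ.filter (fun j : Fin n =>
            v j ≠ 0 ∧ (if 0 < v j then x j = 1 else x j = 0)), |v j| := by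
      rw [← hmap, Finset.sum_map]; rfl
    rw [hT, hc]
    simp only [Finset.sum_filter]
    rw [← Finset.sum_add_distrib]
    apply Finset.sum_congr rfl
    intro j _
    have hx : x j = 0 ∨ x j = 1 := by
      have h2 := (x j).isLt
      interval_cases h : (x j : ℕ)
      · left; exact Fin.ext h
      · right; exact Fin.ext h
    rcases lt_trichotomy (v j) 0 with hvj | hvj | hvj
    · rcases hx with h | h <;>
        simp [h, hvj, ne_of_lt hvj, not_lt.mpr (le_of_lt hvj), abs_of_neg hvj]
    · simp [hvj]
    · rcases hx with h | h <;>
        simp [h, hvj, ne_of_gt hvj, not_lt.mpr (le_of_lt hvj), abs_of_pos hvj,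
          asymm hvj]
  have fin2 : ∀ b : Fin 2, b = 0 ∨ b = 1 := by decide
  -- the injection
  set ψ : (Fin n → Fin 2) → Finset {j : Fin n // v j ≠ 0} × ({j : Fin n // v j = 0} → Fin 2) :=
    fun x => (B x, fun j => x j.1) with hψ
  have hinj : Function.Injective ψ := by
    intro x y hxy
    have h1 : B x = B y := congrArg Prod.fst hxy
    have h2 : (fun j : {j : Fin n // v j = 0} => x j.1)
        = fun j : {j : Fin n // v j = 0} => y j.1 := congrArg Prod.snd hxy
    funext j
    by_cases hvj : v j = 0
    · exact congrFun h2 ⟨j, hvj⟩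
    · have hmem := Finset.ext_iff.mp h1 ⟨j, hvj⟩
      simp only [hB, Finset.mem_filter, Finset.mem_univ, true_and] at hmem
      by_cases hpos : 0 < v j
      · simp only [hpos, if_pos] at hmem
        rcases fin2 (x j) with h | h <;> rcases fin2 (y j) with h' | h' <;>
          simp [h, h'] at hmem ⊢ <;> omega
      · simp only [hpos, if_neg, if_false] at hmem
        rcases fin2 (x j) with h | h <;> rcases fin2 (y j) with h' | h' <;>
          simp [h, h'] at hmem ⊢ <;> omega
  -- the antichain
  set 𝒜 : Finset (Finset {j : Fin n // v j ≠ 0}) :=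
    univ.filter (fun Bs => ∑ j ∈ Bs, |v j.1| = a - c) with hA
  have hanti : IsAntichain (· ⊆ ·) (𝒜 : Set (Finset {j : Fin n // v j ≠ 0})) := by
    intro P hP Q hQ hne hPQ
    simp only [hA, Finset.coe_filter, Set.mem_setOf_eq, Finset.mem_univ, true_and] at hP hQ
    have hssub : (Q \ P).Nonempty := by
      rw [Finset.sdiff_nonempty]
      intro h
      exact hne (Finset.Subset.antisymm hPQ h)
    have hsd := Finset.sum_sdiff (f := fun j => |v j.1|) hPQ
    have hpos : 0 < ∑ j ∈ Q \ P, |v j.1| :=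
      Finset.sum_pos (fun j _ => abs_pos.mpr j.2) hssub
    rw [hP, hQ] at hsd
    linarith
  have hAcard : 𝒜.card ≤ s.choose (s / 2) := IsAntichain.sperner hanti
  -- counting
  set t := Fintype.card {j : Fin n // v j = 0} with htdef
  have hcount : Ef.card ≤ 𝒜.card * 2 ^ t := by
    calc Ef.card = (Ef.image ψ).card := (Finset.card_image_of_injective _ hinj).symm
      _ ≤ (𝒜 ×ˢ (univ : Finset ({j : Fin n // v j = 0} → Fin 2))).card := by
          apply Finset.card_le_card
          intro p hp
          simp only [Finset.mem_image] at hp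
          obtain ⟨x, hx, rfl⟩ := hp
          rw [Finset.mem_product]
          refine ⟨?_, Finset.mem_univ _⟩
          simp only [hA, Finset.mem_filter, Finset.mem_univ, true_and]
          rw [hEf, Finset.mem_filter] at hx
          have := hx.2
          rw [hsum x] at this
          linarith
      _ = 𝒜.card * 2 ^ t := by
          rw [Finset.card_product, Finset.card_univ, Fintype.card_fun]
          simp
          exact Or.inl htdef.symm
  have hst : s + t = n := by
    have h := Fintype.card_subtype_compl (fun j : Fin n => v j = 0)
    have hs' : Fintype.card {j : Fin n // v j ≠ 0}
        = n - Fintype.card {j : Fin n // v j = 0} := by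
      simpa [Fintype.card_fin] using h
    have hle : Fintype.card {j : Fin n // v j = 0} ≤ n := by
      simpa using Fintype.card_subtype_le (fun j : Fin n => v j = 0)
    rw [hsdef, htdef, hs']
    exact Nat.sub_add_cancel hle
  -- put it together
  rw [hncard]
  unfold cubeProb
  rw [hEcard]
  have h2n : (2:ℝ) ^ n = 2 ^ s * 2 ^ t := by rw [← pow_add, hst]
  have hsqrtpos : 0 < Real.sqrt s := Real.sqrt_pos.mpr (by exact_mod_cast hs1)
  have step1 : (Ef.card : ℝ) / 2 ^ n ≤ (s.choose (s / 2) : ℝ) / 2 ^ s := by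
    rw [h2n]
    rw [div_le_div_iff₀ (by positivity) (by positivity)]
    have hc1 : (Ef.card : ℝ) ≤ (𝒜.card : ℝ) * 2 ^ t := by exact_mod_cast hcount
    have hc2 : (𝒜.card : ℝ) ≤ (s.choose (s / 2) : ℝ) := by exact_mod_cast hAcard
    calc (Ef.card : ℝ) * 2 ^ s ≤ ((𝒜.card : ℝ) * 2 ^ t) * 2 ^ s := by
          apply mul_le_mul_of_nonneg_right hc1 (by positivity)
      _ ≤ ((s.choose (s / 2) : ℝ) * 2 ^ t) * 2 ^ s := by
          have : (0:ℝ) ≤ 2 ^ t * 2 ^ s := by positivity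
          nlinarith [hc2]
      _ = (s.choose (s / 2) : ℝ) * (2 ^ s * 2 ^ t) := by ring
  have step2 : (s.choose (s / 2) : ℝ) / 2 ^ s ≤ 1 / Real.sqrt s := by
    rw [div_le_div_iff₀ (by positivity) hsqrtpos]
    rw [one_mul]
    exact choose_sqrt_le s hs1
  exact le_trans step1 step2
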